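/- Under the gathering condition of the bugs model with broadcast control, the termination (mutual capture) time satisfies T_m ≤ t_0 + 2n ∑_{i=1}^n d_i(t_0) / (1 − 2n²‖U_c‖), assuming ‖U_c‖ < 1/(2n²). -/

import Mathlib

/-- Bugs model with broadcast control, `‖U_c‖ < 1/(2n²)`: the mutual-capture time
satisfies `T_m ≤ t₀ + 2n·D(t₀)/(1 − 2n²‖U_c‖)`, where `D = ∑ d_i`. -/
theorem bugs_termination_time_bound (n : ℕ) [NeZero n]
    (Uc : EuclideanSpace ℝ (Fin 2)) (hUc : ‖Uc‖ < 1 / (2 * n ^ 2))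
    (D : ℝ → ℝ) (hcont : Continuous D)
    (t0 Tm : ℝ) (ht0 : t0 ≤ Tm)
    (hD0 : 0 < D t0)
    (hdecay : ∀ t, t0 ≤ t → 0 < D t →
      ∃ D' : ℝ, HasDerivAt D D' t ∧ D' ≤ -1 / (2 * n) + n * ‖Uc‖)
    (hTm : D Tm = 0)
    (hfirst : ∀ t, t0 ≤ t → t < Tm → 0 < D t) :
    Tm ≤ t0 + 2 * n * D t0 / (1 - 2 * n ^ 2 * ‖Uc‖) := by
  set N : ℝ := (n : ℝ) with hN
  have hn1 : (1:ℝ) ≤ N := by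
    rw [hN]
    exact_mod_cast Nat.one_le_iff_ne_zero.mpr (NeZero.ne n)
  have hn0 : (0:ℝ) < N := by linarith
  set c : ℝ := 1 / (2 * N) - N * ‖Uc‖ with hc
  have hcpos : 0 < c := by
    have h1 : N * ‖Uc‖ < N * (1 / (2 * N ^ 2)) :=
      mul_lt_mul_of_pos_left hUc hn0
    have h2 : N * (1 / (2 * N ^ 2)) = 1 / (2 * N) := by
      field_simp
    rw [h2] at h1
    simp only [hc]
    linarith
  set g : ℝ → ℝ := fun t => D t + c * t with hg
  have hanti : AntitoneOn g (Set.Icc t0 Tm) := by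
    apply antitoneOn_of_deriv_nonpos (convex_Icc t0 Tm)
    · exact (hcont.add (continuous_const.mul continuous_id)).continuousOn
    · intro t ht
      rw [interior_Icc] at ht
      obtain ⟨D', hD', _⟩ := hdecay t ht.1.le (hfirst t ht.1.le ht.2)
      exact ((hD'.add (((hasDerivAt_id t).const_mul c))).differentiableAt).differentiableWithinAt
    · intro t ht
      rw [interior_Icc] at ht
      obtain ⟨D', hD', hle⟩ := hdecay t ht.1.le (hfirst t ht.1.le ht.2)
      have hgd : HasDerivAt g (D' + c * 1) t := by
        exact hD'.add (((hasDerivAt_id t).const_mul c))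
      rw [hgd.deriv]
      have : D' ≤ -c := by
        simp only [hc]
        have : -1 / (2 * N) + N * ‖Uc‖ = -(1 / (2 * N) - N * ‖Uc‖) := by ring
        linarith [hle, this ▸ hle]
      linarith
  have hmem0 : t0 ∈ Set.Icc t0 Tm := ⟨le_refl _, ht0⟩
  have hmem1 : Tm ∈ Set.Icc t0 Tm := ⟨ht0, le_refl _⟩
  have hkey : c * (Tm - t0) ≤ D t0 := by
    have := hanti hmem0 hmem1 ht0
    simp only [hg, hTm] at this
    nlinarith
  have hden : 1 - 2 * N ^ 2 * ‖Uc‖ = 2 * N * c := by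
    field_simp [hc]
    rw [hc]
    field_simp
  rw [hden, mul_div_mul_left _ _ (by positivity : (2:ℝ) * N ≠ 0)]
  have : Tm - t0 ≤ D t0 / c := (le_div_iff₀ hcpos).mpr (by linarith)
  linarith
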